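/- Mutual information characterization of the KL contraction coefficient: for any channel K from a finite alphabet 𝒳 to a finite alphabet 𝒴, η_KL(K) equals the supremum of I(U; Y)/I(U; X) over all Markov chains U → X → Y in which U takes values in a finite set, the conditional law of Y given X is K, and I(U; X) > 0. -/

import Mathlib

/-- Kullback–Leibler divergence between two distributions on a finite alphabet. -/
noncomputable def klDiv {X : Type*} [Fintype X] (P Q : X → ℝ) : ℝ :=
  ∑ x, P x * Real.log (P x / Q x)

/-- `P` is a probability distribution on the finite alphabet `X`. -/
def IsProbDist {X : Type*} [Fintype X] (P : X → ℝ) : Prop :=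
  (∀ x, 0 ≤ P x) ∧ ∑ x, P x = 1

/-- `K` is a channel (Markov kernel) from `X` to `Y`. -/
def IsChannel {X Y : Type*} [Fintype Y] (K : X → Y → ℝ) : Prop :=
  (∀ x y, 0 ≤ K x y) ∧ ∀ x, ∑ y, K x y = 1

/-- Pushforward `K ∘ P` of a distribution `P` through a channel `K`. -/
noncomputable def pushforward {X Y : Type*} [Fintype X] (K : X → Y → ℝ) (P : X → ℝ) :
    Y → ℝ := fun y => ∑ x, P x * K x y

/-- The Kullback–Leibler contraction coefficient of a channel `K`. -/
noncomputable def etaKL {X Y : Type*} [Fintype X] [Fintype Y] (K : X → Y → ℝ) : ℝ :=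
  sSup {r : ℝ | ∃ P Q : X → ℝ, IsProbDist P ∧ IsProbDist Q ∧
    (∀ x, Q x = 0 → P x = 0) ∧ 0 < klDiv P Q ∧
    r = klDiv (pushforward K P) (pushforward K Q) / klDiv P Q}

/-- Mutual information of a joint distribution `J` on `A × B`: the KL divergence
between the joint law and the product of its marginals. -/
noncomputable def mutInfo {A B : Type*} [Fintype A] [Fintype B] (J : A × B → ℝ) : ℝ :=
  klDiv J (fun p => (∑ b, J (p.1, b)) * (∑ a, J (a, p.2)))

section Helpers

open Real Finset

lemma one_sub_inv_le_log {t : ℝ} (ht : 0 < t) : 1 - 1/t ≤ Real.log t := by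
  have h := Real.log_le_sub_one_of_pos (x := 1/t) (by positivity)
  rw [one_div, Real.log_inv] at h
  rw [one_div]
  linarith

lemma one_sub_inv_lt_log {t : ℝ} (ht : 0 < t) (hne : t ≠ 1) : 1 - 1/t < Real.log t := by
  have h := Real.log_lt_sub_one_of_pos (x := 1/t) (by positivity)
    (by simp only [one_div, ne_eq, inv_eq_one]; exact hne)
  rw [one_div, Real.log_inv] at h
  rw [one_div]
  linarith

lemma log_sum_ineq {ι : Type*} (s : Finset ι) (a b : ι → ℝ)
    (ha : ∀ i ∈ s, 0 ≤ a i) (hb : ∀ i ∈ s, 0 ≤ b i)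
    (hac : ∀ i ∈ s, b i = 0 → a i = 0) :
    (∑ i ∈ s, a i) * Real.log ((∑ i ∈ s, a i) / (∑ i ∈ s, b i)) ≤
      ∑ i ∈ s, a i * Real.log (a i / b i) := by
  set A := ∑ i ∈ s, a i with hA
  set B := ∑ i ∈ s, b i with hB
  rcases eq_or_lt_of_le (Finset.sum_nonneg ha) with h0 | hApos
  · -- A = 0
    have hall : ∀ i ∈ s, a i = 0 := by
      intro i hi
      exact (Finset.sum_eq_zero_iff_of_nonneg ha).mp h0.symm i hi
    have : ∑ i ∈ s, a i * Real.log (a i / b i) = 0 :=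
      Finset.sum_eq_zero fun i hi => by rw [hall i hi, zero_mul]
    rw [this, hA, ← h0, zero_mul]
  · have hBpos : 0 < B := by
      rcases eq_or_lt_of_le (Finset.sum_nonneg hb) with h0 | h
      · exfalso
        have hallb : ∀ i ∈ s, b i = 0 :=
          fun i hi => (Finset.sum_eq_zero_iff_of_nonneg hb).mp h0.symm i hi
        have : A = 0 := Finset.sum_eq_zero fun i hi => hac i hi (hallb i hi)
        linarith
      · exact h
    -- per-term bound
    have key : ∀ i ∈ s, a i * Real.log (A / B) + (a i - b i * (A / B)) ≤
        a i * Real.log (a i / b i) := by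
      intro i hi
      rcases eq_or_lt_of_le (ha i hi) with h0 | hai
      · rw [← h0, zero_mul, zero_mul, zero_add, zero_sub]
        have : 0 ≤ b i * (A / B) := mul_nonneg (hb i hi) (by positivity)
        linarith
      · have hbi : 0 < b i := by
          rcases eq_or_lt_of_le (hb i hi) with h0 | h; · exact absurd (hac i hi h0.symm) (by linarith)
          · exact h
        set x := (a i / b i) / (A / B) with hx
        have hxpos : 0 < x := by positivity
        have hlog := one_sub_inv_le_log hxpos
        have hxlog : Real.log x = Real.log (a i / b i) - Real.log (A / B) :=
          Real.log_div (by positivity) (by positivity)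
        have hinv : a i * (1 / x) = b i * (A / B) := by
          rw [hx]
          field_simp
        have := mul_le_mul_of_nonneg_left hlog (le_of_lt hai)
        rw [hxlog] at this
        nlinarith [this, hinv]
    calc A * Real.log (A / B) = ∑ i ∈ s, (a i * Real.log (A / B) + (a i - b i * (A / B))) := by
          rw [Finset.sum_add_distrib, Finset.sum_sub_distrib, ← Finset.sum_mul, ← Finset.sum_mul,
            ← hA, ← hB]
          have : B * (A / B) = A := by field_simp
          rw [this]; ring
      _ ≤ ∑ i ∈ s, a i * Real.log (a i / b i) := Finset.sum_le_sum key

lemma klDiv_term_ge {p q : ℝ} (hp : 0 ≤ p) (hq : 0 ≤ q) (hac : q = 0 → p = 0) :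
    p - q ≤ p * Real.log (p / q) := by
  rcases eq_or_lt_of_le hp with h0 | hppos
  · rw [← h0, zero_mul]; linarith
  · have hqpos : 0 < q := by
      rcases eq_or_lt_of_le hq with h0 | h
      · exact absurd (hac h0.symm) (by linarith)
      · exact h
    have hx : (0:ℝ) < p / q := by positivity
    have h := one_sub_inv_le_log hx
    have hinv : p * (1 / (p / q)) = q := by field_simp
    nlinarith

lemma klDiv_nonneg' {Z : Type*} [Fintype Z] {P Q : Z → ℝ} (hP : IsProbDist P)
    (hQ : IsProbDist Q) (hac : ∀ z, Q z = 0 → P z = 0) : 0 ≤ klDiv P Q := by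
  have : ∑ z, (P z - Q z) ≤ klDiv P Q :=
    Finset.sum_le_sum fun z _ => klDiv_term_ge (hP.1 z) (hQ.1 z) (hac z)
  rw [Finset.sum_sub_distrib, hP.2, hQ.2] at this
  linarith

lemma eq_of_klDiv_eq_zero {Z : Type*} [Fintype Z] {P Q : Z → ℝ} (hP : IsProbDist P)
    (hQ : IsProbDist Q) (hac : ∀ z, Q z = 0 → P z = 0) (h : klDiv P Q = 0) : P = Q := by
  have hterm : ∀ z ∈ Finset.univ, (0:ℝ) ≤ P z * Real.log (P z / Q z) - (P z - Q z) :=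
    fun z _ => by linarith [klDiv_term_ge (hP.1 z) (hQ.1 z) (hac z)]
  have hsum : ∑ z, (P z * Real.log (P z / Q z) - (P z - Q z)) = 0 := by
    rw [Finset.sum_sub_distrib, Finset.sum_sub_distrib, hP.2, hQ.2]
    have : ∑ z, P z * Real.log (P z / Q z) = klDiv P Q := rfl
    rw [this, h]; ring
  have hz : ∀ z ∈ Finset.univ, P z * Real.log (P z / Q z) - (P z - Q z) = 0 :=
    (Finset.sum_eq_zero_iff_of_nonneg hterm).mp hsum
  funext z
  have hz' := hz z (Finset.mem_univ z)
  rcases eq_or_lt_of_le (hP.1 z) with h0 | hppos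
  · -- P z = 0, then equation gives Q z = 0
    rw [← h0] at hz' ⊢
    simp at hz'
    linarith
  · have hqpos : 0 < Q z := by
      rcases eq_or_lt_of_le (hQ.1 z) with h0 | hq; · exact absurd (hac z h0.symm) (by linarith)
      · exact hq
    by_contra hne
    have hx : (0:ℝ) < P z / Q z := by positivity
    have hxne : P z / Q z ≠ 1 := by
      intro h1
      exact hne (by field_simp at h1; linarith)
    have hs := one_sub_inv_lt_log hx hxne
    have hinv : P z * (1 / (P z / Q z)) = Q z := by field_simp
    nlinarith

lemma klDiv_self {Z : Type*} [Fintype Z] (R : Z → ℝ) : klDiv R R = 0 := by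
  unfold klDiv
  apply Finset.sum_eq_zero
  intro z _
  rcases eq_or_ne (R z) 0 with h | h
  · rw [h, zero_mul]
  · rw [div_self h, Real.log_one, mul_zero]

lemma push_probDist {X Y : Type*} [Fintype X] [Fintype Y] {K : X → Y → ℝ} (hK : IsChannel K)
    {P : X → ℝ} (hP : IsProbDist P) : IsProbDist (pushforward K P) := by
  constructor
  · intro y
    exact Finset.sum_nonneg fun x _ => mul_nonneg (hP.1 x) (hK.1 x y)
  · rw [show ∑ y, pushforward K P y = ∑ x, P x * ∑ y, K x y by
      unfold pushforward; rw [Finset.sum_comm]; simp [Finset.mul_sum]]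
    simp only [hK.2, mul_one, hP.2]

lemma push_ac {X Y : Type*} [Fintype X] [Fintype Y] {K : X → Y → ℝ} (hK : IsChannel K)
    {P Q : X → ℝ} (hP : ∀ x, 0 ≤ P x) (hQ : ∀ x, 0 ≤ Q x) (hac : ∀ x, Q x = 0 → P x = 0) :
    ∀ y, pushforward K Q y = 0 → pushforward K P y = 0 := by
  intro y h
  have hterm : ∀ x ∈ Finset.univ, Q x * K x y = 0 :=
    (Finset.sum_eq_zero_iff_of_nonneg (fun x _ => mul_nonneg (hQ x) (hK.1 x y))).mp h
  apply Finset.sum_eq_zero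
  intro x _
  rcases mul_eq_zero.mp (hterm x (Finset.mem_univ x)) with h0 | h0
  · rw [hac x h0, zero_mul]
  · rw [h0, mul_zero]

lemma klDiv_push_le {X Y : Type*} [Fintype X] [Fintype Y] {K : X → Y → ℝ} (hK : IsChannel K)
    {P Q : X → ℝ} (hP : ∀ x, 0 ≤ P x) (hQ : ∀ x, 0 ≤ Q x)
    (hac : ∀ x, Q x = 0 → P x = 0) :
    klDiv (pushforward K P) (pushforward K Q) ≤ klDiv P Q := by
  have hrhs : klDiv P Q = ∑ y, ∑ x, (P x * K x y) * Real.log ((P x * K x y) / (Q x * K x y)) := by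
    rw [Finset.sum_comm]
    unfold klDiv
    apply Finset.sum_congr rfl
    intro x _
    have : ∀ y ∈ Finset.univ, (P x * K x y) * Real.log ((P x * K x y) / (Q x * K x y))
        = K x y * (P x * Real.log (P x / Q x)) := by
      intro y _
      rcases eq_or_ne (K x y) 0 with h | h
      · rw [h]; ring
      · rw [mul_div_mul_right _ _ h]; ring
    rw [Finset.sum_congr rfl this, ← Finset.sum_mul, hK.2 x, one_mul]
  rw [hrhs]
  unfold klDiv pushforward
  apply Finset.sum_le_sum
  intro y _
  exact log_sum_ineq Finset.univ _ _
    (fun x _ => mul_nonneg (hP x) (hK.1 x y))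
    (fun x _ => mul_nonneg (hQ x) (hK.1 x y))
    (fun x _ h => by
      rcases mul_eq_zero.mp h with h0 | h0
      · rw [hac x h0, zero_mul]
      · rw [h0, mul_zero])

lemma mutInfo_decomp {U X : Type*} [Fintype U] [Fintype X] (J : U × X → ℝ)
    (hJ : ∀ p, 0 ≤ J p) :
    mutInfo J = ∑ u, (∑ x, J (u, x)) *
      klDiv (fun x => J (u, x) / ∑ x', J (u, x')) (fun x => ∑ u', J (u', x)) := by
  unfold mutInfo klDiv
  rw [Fintype.sum_prod_type]
  apply Finset.sum_congr rfl
  intro u _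
  rw [Finset.mul_sum]
  apply Finset.sum_congr rfl
  intro x _
  rcases eq_or_lt_of_le (Finset.sum_nonneg (fun x' (_ : x' ∈ Finset.univ) => hJ (u, x'))) with h0 | hpos
  · have hzero : J (u, x) = 0 :=
      (Finset.sum_eq_zero_iff_of_nonneg (fun x' _ => hJ (u, x'))).mp h0.symm x (Finset.mem_univ x)
    rw [← h0, hzero]
    simp
  · have hne : (∑ x', J (u, x')) ≠ 0 := ne_of_gt hpos
    rw [← mul_assoc, mul_div_cancel₀ _ hne, div_div]

lemma margX_probDist {U X : Type*} [Fintype U] [Fintype X] {J : U × X → ℝ}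
    (hJ : IsProbDist J) : IsProbDist (fun x => ∑ u, J (u, x)) := by
  constructor
  · intro x; exact Finset.sum_nonneg fun u _ => hJ.1 (u, x)
  · rw [Finset.sum_comm, ← Fintype.sum_prod_type]
    exact hJ.2

lemma condDist_probDist {U X : Type*} [Fintype U] [Fintype X] {J : U × X → ℝ}
    (hJ : IsProbDist J) {u : U} (hu : (∑ x, J (u, x)) ≠ 0) :
    IsProbDist (fun x => J (u, x) / ∑ x', J (u, x')) := by
  constructor
  · intro x
    exact div_nonneg (hJ.1 _) (Finset.sum_nonneg fun x' _ => hJ.1 _)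
  · rw [← Finset.sum_div, div_self hu]

lemma condDist_ac {U X : Type*} [Fintype U] [Fintype X] {J : U × X → ℝ}
    (hJ : IsProbDist J) (u : U) :
    ∀ x, (∑ u', J (u', x)) = 0 → J (u, x) / (∑ x', J (u, x')) = 0 := by
  intro x h
  have : J (u, x) = 0 :=
    (Finset.sum_eq_zero_iff_of_nonneg (fun u' _ => hJ.1 (u', x))).mp h u (Finset.mem_univ u)
  rw [this, zero_div]

lemma mutInfo_push_le {U X Y : Type*} [Fintype U] [Fintype X] [Fintype Y] {K : X → Y → ℝ}
    (hK : IsChannel K) (J : U × X → ℝ) (hJ : IsProbDist J) (c : ℝ)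
    (hc : ∀ P Q : X → ℝ, IsProbDist P → IsProbDist Q → (∀ x, Q x = 0 → P x = 0) →
      klDiv (pushforward K P) (pushforward K Q) ≤ c * klDiv P Q) :
    mutInfo (fun p : U × Y => ∑ x, J (p.1, x) * K x p.2) ≤ c * mutInfo J := by
  set JY : U × Y → ℝ := fun p => ∑ x, J (p.1, x) * K x p.2 with hJYdef
  have hJYnn : ∀ p, 0 ≤ JY p :=
    fun p => Finset.sum_nonneg fun x _ => mul_nonneg (hJ.1 _) (hK.1 _ _)
  have hPU : ∀ u, ∑ y, JY (u, y) = ∑ x, J (u, x) := by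
    intro u
    rw [show ∑ y, JY (u, y) = ∑ x, J (u, x) * ∑ y, K x y from by
      rw [Finset.sum_comm]; simp [hJYdef, Finset.mul_sum]]
    simp [hK.2]
  have hPY : (fun y => ∑ u, JY (u, y)) = pushforward K (fun x => ∑ u, J (u, x)) := by
    funext y
    unfold pushforward
    rw [show ∑ u, JY (u, y) = ∑ x, (∑ u, J (u, x)) * K x y from by
      simp only [hJYdef]
      rw [Finset.sum_comm]
      exact Finset.sum_congr rfl fun x _ => (Finset.sum_mul _ _ _).symm]
  rw [mutInfo_decomp JY hJYnn, mutInfo_decomp J hJ.1, Finset.mul_sum]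
  apply Finset.sum_le_sum
  intro u _
  rcases eq_or_lt_of_le (Finset.sum_nonneg (fun x (_ : x ∈ Finset.univ) => hJ.1 (u, x))) with h0 | hpos
  · rw [hPU u, ← h0]
    simp
  · have hne : (∑ x, J (u, x)) ≠ 0 := ne_of_gt hpos
    have hcond : (fun y => JY (u, y) / ∑ y', JY (u, y'))
        = pushforward K (fun x => J (u, x) / ∑ x', J (u, x')) := by
      funext y
      rw [hPU u]
      unfold pushforward
      rw [Finset.sum_div]
      apply Finset.sum_congr rfl
      intro x _
      rw [mul_div_right_comm]
    rw [hcond, hPY, hPU u]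
    rw [show c * ((∑ x, J (u, x)) * klDiv (fun x => J (u, x) / ∑ x', J (u, x'))
        (fun x => ∑ u', J (u', x))) = (∑ x, J (u, x)) * (c * klDiv (fun x => J (u, x) / ∑ x', J (u, x'))
        (fun x => ∑ u', J (u', x))) from by ring]
    apply mul_le_mul_of_nonneg_left _ (le_of_lt hpos)
    exact hc _ _ (condDist_probDist hJ hne) (margX_probDist hJ) (condDist_ac hJ u)

lemma exists_pos_pair {U X : Type*} [Fintype U] [Fintype X] (J : U × X → ℝ)
    (hJ : IsProbDist J) (hpos : 0 < mutInfo J) :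
    ∃ P Q : X → ℝ, IsProbDist P ∧ IsProbDist Q ∧ (∀ x, Q x = 0 → P x = 0) ∧ 0 < klDiv P Q := by
  rw [mutInfo_decomp J hJ.1] at hpos
  have h := Finset.exists_lt_of_sum_lt (f := fun _ : U => (0:ℝ))
    (g := fun u => (∑ x, J (u, x)) * klDiv (fun x => J (u, x) / ∑ x', J (u, x'))
      (fun x => ∑ u', J (u', x))) (by simpa using hpos)
  obtain ⟨u, -, hu⟩ := h
  replace hu : (0:ℝ) < (∑ x, J (u, x)) * klDiv (fun x => J (u, x) / ∑ x', J (u, x'))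
      (fun x => ∑ u', J (u', x)) := hu
  have hPUnn : 0 ≤ ∑ x, J (u, x) := Finset.sum_nonneg fun x _ => hJ.1 (u, x)
  have hPUpos : 0 < ∑ x, J (u, x) := by
    rcases eq_or_lt_of_le hPUnn with h0 | h; · rw [← h0] at hu; simp at hu
    · exact h
  have hkl : 0 < klDiv (fun x => J (u, x) / ∑ x', J (u, x')) (fun x => ∑ u', J (u', x)) := by
    by_contra hle
    push_neg at hle
    nlinarith
  exact ⟨_, _, condDist_probDist hJ (ne_of_gt hPUpos), margX_probDist hJ, condDist_ac hJ u, hkl⟩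

lemma mul_div_mul_left' {c a b : ℝ} (hc : c ≠ 0) : c * a / (c * b) = a / b := by
  rcases eq_or_ne b 0 with h | h
  · simp [h]
  · field_simp

lemma mul_div_mul_right' {c a b : ℝ} (hc : c ≠ 0) : a * c / (b * c) = a / b := by
  rcases eq_or_ne b 0 with h | h
  · simp [h]
  · field_simp

lemma mutInfo_mix {Z : Type*} [Fintype Z] (P Q : Z → ℝ) (hP : ∑ z, P z = 1)
    (hQ : ∑ z, Q z = 1) {t : ℝ} (ht0 : t ≠ 0) (ht1 : (1:ℝ) - t ≠ 0) :
    mutInfo (fun p : Bool × Z => if p.1 then t * P p.2 else (1 - t) * Q p.2)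
      = t * klDiv P (fun z => t * P z + (1 - t) * Q z)
        + (1 - t) * klDiv Q (fun z => t * P z + (1 - t) * Q z) := by
  have hs1 : ∑ b, t * P b = t := by rw [← Finset.mul_sum, hP, mul_one]
  have hs2 : ∑ b, (1 - t) * Q b = 1 - t := by rw [← Finset.mul_sum, hQ, mul_one]
  unfold mutInfo klDiv
  rw [Fintype.sum_prod_type, Fintype.sum_bool, Finset.mul_sum, Finset.mul_sum]
  congr 1
  · apply Finset.sum_congr rfl
    intro z _
    simp only [if_true, Fintype.sum_bool, Bool.false_eq_true, if_false]
    rw [hs1, mul_div_mul_left' ht0]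
    ring
  · apply Finset.sum_congr rfl
    intro z _
    simp only [if_true, Fintype.sum_bool, Bool.false_eq_true, if_false]
    rw [hs2, mul_div_mul_left' ht1]
    ring

open Filter Topology

lemma tendsto_klDiv_mix {Z : Type*} [Fintype Z] {P Q : Z → ℝ} (hP : IsProbDist P)
    (hQ : IsProbDist Q) (hac : ∀ z, Q z = 0 → P z = 0) :
    Filter.Tendsto (fun t : ℝ => klDiv P (fun z => t * P z + (1 - t) * Q z))
      (𝓝[>] 0) (𝓝 (klDiv P Q)) := by
  apply Filter.Tendsto.mono_left _ nhdsWithin_le_nhds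
  have hval : klDiv P Q = ∑ z, P z * Real.log (P z / ((0:ℝ) * P z + (1 - 0) * Q z)) := by
    unfold klDiv
    apply Finset.sum_congr rfl
    intro z _
    norm_num
  rw [hval]
  unfold klDiv
  apply tendsto_finset_sum
  intro z _
  rcases eq_or_lt_of_le (hP.1 z) with h0 | hpz
  · simp only [← h0, zero_mul]
    exact tendsto_const_nhds
  · have hqz : 0 < Q z := by
      rcases eq_or_lt_of_le (hQ.1 z) with hq0 | hq; · exact absurd (hac z hq0.symm) (by linarith)
      · exact hq
    have hc : ContinuousAt (fun t : ℝ => P z * Real.log (P z / (t * P z + (1 - t) * Q z))) 0 := by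
      apply ContinuousAt.mul continuousAt_const
      apply ContinuousAt.log
      · apply ContinuousAt.div continuousAt_const
        · exact (continuousAt_id.mul continuousAt_const).add
            ((continuousAt_const.sub continuousAt_id).mul continuousAt_const)
        · show (0:ℝ) * P z + (1 - 0) * Q z ≠ 0
          norm_num
          linarith
      · show P z / ((0:ℝ) * P z + (1 - 0) * Q z) ≠ 0
        norm_num
        constructor <;> intro h <;> linarith
    exact hc.tendsto

lemma tendsto_klDiv_mix_div {Z : Type*} [Fintype Z] {P Q : Z → ℝ} (hP : IsProbDist P)
    (hQ : IsProbDist Q) (hac : ∀ z, Q z = 0 → P z = 0) :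
    Filter.Tendsto (fun t : ℝ => klDiv Q (fun z => t * P z + (1 - t) * Q z) / t)
      (𝓝[>] 0) (𝓝 0) := by
  set F : ℝ → ℝ := fun t => ∑ z, Q z * Real.log (Q z / (t * P z + (1 - t) * Q z)) with hFdef
  have key : ∀ z ∈ Finset.univ, HasDerivAt
      (fun t : ℝ => Q z * Real.log (Q z / (t * P z + (1 - t) * Q z)))
      (if Q z = 0 then (0:ℝ) else Q z - P z) 0 := by
    intro z _
    by_cases hz : Q z = 0
    · simp only [hz, zero_mul, if_pos hz]
      exact hasDerivAt_const 0 0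
    · rw [if_neg hz]
      have hq : 0 < Q z := lt_of_le_of_ne (hQ.1 z) (Ne.symm hz)
      have hM : HasDerivAt (fun t : ℝ => t * P z + (1 - t) * Q z) (P z - Q z) 0 := by
        have h1 : HasDerivAt (fun t : ℝ => t * P z) (P z) 0 := by
          simpa using (hasDerivAt_id (0:ℝ)).mul_const (P z)
        have h2 : HasDerivAt (fun t : ℝ => (1 - t) * Q z) (-Q z) 0 := by
          simpa using ((hasDerivAt_const (0:ℝ) (1:ℝ)).sub (hasDerivAt_id 0)).mul_const (Q z)
        refine (h1.fun_add h2).congr_deriv ?_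
        try ring
      have hM0 : (fun t : ℝ => t * P z + (1 - t) * Q z) 0 ≠ 0 := by
        show (0:ℝ) * P z + (1 - 0) * Q z ≠ 0
        norm_num [hz]
      have hdiv := (hasDerivAt_const (0:ℝ) (Q z)).fun_div hM hM0
      have hlog := hdiv.log (by
        show Q z / ((0:ℝ) * P z + (1 - 0) * Q z) ≠ 0
        norm_num [hz])
      have hfin := hlog.const_mul (Q z)
      refine hfin.congr_deriv ?_
      rw [show (0:ℝ) * P z + (1 - 0) * Q z = Q z by ring]
      field_simp
      ring
  have hsum : ∑ z, (if Q z = 0 then (0:ℝ) else Q z - P z) = 0 := by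
    have heq : ∀ z ∈ Finset.univ, (if Q z = 0 then (0:ℝ) else Q z - P z) = Q z - P z := by
      intro z _
      split_ifs with h
      · rw [h, hac z h]; ring
      · rfl
    rw [Finset.sum_congr rfl heq, Finset.sum_sub_distrib, hP.2, hQ.2, sub_self]
  have hder : HasDerivAt F 0 0 := by
    have := HasDerivAt.fun_sum key
    rwa [hsum] at this
  have hF0 : F 0 = 0 := by
    apply Finset.sum_eq_zero
    intro z _
    rcases eq_or_ne (Q z) 0 with h | h
    · rw [h, zero_mul]
    · rw [show (0:ℝ) * P z + (1 - 0) * Q z = Q z by ring, div_self h, Real.log_one, mul_zero]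
  have hslope := hasDerivAt_iff_tendsto_slope.mp hder
  have hT : Filter.Tendsto (fun t => F t / t) (𝓝[≠] (0:ℝ)) (𝓝 0) := by
    apply hslope.congr
    intro t
    rw [slope_def_field, hF0, sub_zero, sub_zero]
  exact hT.mono_left (nhdsWithin_mono 0 (fun x hx => ne_of_gt hx))

theorem etaKL_eq_sup_mutInfo_ratio' {X Y : Type*} [Fintype X] [Fintype Y]
    (K : X → Y → ℝ) (hK : IsChannel K) :
    (sSup {r : ℝ | ∃ P Q : X → ℝ, IsProbDist P ∧ IsProbDist Q ∧
    (∀ x, Q x = 0 → P x = 0) ∧ 0 < klDiv P Q ∧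
    r = klDiv (pushforward K P) (pushforward K Q) / klDiv P Q})
      = sSup {r : ℝ | ∃ (U : Type) (_ : Fintype U) (PUX : U × X → ℝ),
      IsProbDist PUX ∧ 0 < mutInfo PUX ∧
      r = mutInfo (fun p : U × Y => ∑ x, PUX (p.1, x) * K x p.2) / mutInfo PUX} := by
  classical
  set A : Set ℝ := {r : ℝ | ∃ P Q : X → ℝ, IsProbDist P ∧ IsProbDist Q ∧
    (∀ x, Q x = 0 → P x = 0) ∧ 0 < klDiv P Q ∧
    r = klDiv (pushforward K P) (pushforward K Q) / klDiv P Q} with hAdef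
  set B : Set ℝ := {r : ℝ | ∃ (U : Type) (_ : Fintype U) (PUX : U × X → ℝ),
      IsProbDist PUX ∧ 0 < mutInfo PUX ∧
      r = mutInfo (fun p : U × Y => ∑ x, PUX (p.1, x) * K x p.2) / mutInfo PUX} with hBdef
  -- A is bounded above by 1
  have hbddA : BddAbove A := by
    refine ⟨1, fun r hr => ?_⟩
    obtain ⟨P, Q, hP, hQ, hac, hD, hr⟩ := hr
    rw [hr, div_le_one hD]
    exact klDiv_push_le hK hP.1 hQ.1 hac
  -- B is bounded above by 1
  have hbddB : BddAbove B := by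
    refine ⟨1, fun r hr => ?_⟩
    obtain ⟨U, iU, J, hJ, hpos, hr⟩ := hr
    rw [hr, div_le_one hpos]
    have := mutInfo_push_le hK J hJ 1 (fun P Q hP hQ hac => by
      rw [one_mul]; exact klDiv_push_le hK hP.1 hQ.1 hac)
    linarith
  -- every element of B is ≤ sSup A
  have claim1 : ∀ r ∈ B, r ≤ sSup A := by
    intro r hr
    obtain ⟨U, iU, J, hJ, hpos, hr⟩ := hr
    have hle := mutInfo_push_le hK J hJ (sSup A) (fun P Q hP hQ hac => by
      rcases eq_or_lt_of_le (klDiv_nonneg' hP hQ hac) with h0 | hDpos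
      · have hPQ : P = Q := eq_of_klDiv_eq_zero hP hQ hac h0.symm
        rw [hPQ, klDiv_self, klDiv_self, mul_zero]
      · have hmem : klDiv (pushforward K P) (pushforward K Q) / klDiv P Q ∈ A :=
          ⟨P, Q, hP, hQ, hac, hDpos, rfl⟩
        have h := le_csSup hbddA hmem
        rw [div_le_iff₀ hDpos] at h
        linarith)
    rw [hr, div_le_iff₀ hpos]
    linarith
  -- every element of A is ≤ sSup B, and B is nonempty if A is
  have claim2 : ∀ r ∈ A, r ≤ sSup B ∧ B.Nonempty := by
    intro r hr
    obtain ⟨P, Q, hP, hQ, hac, hD, hr⟩ := hr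
    have hPp := push_probDist hK hP
    have hQp := push_probDist hK hQ
    have hacp := push_ac hK hP.1 hQ.1 hac
    set fX : ℝ → ℝ := fun t => t * klDiv P (fun z => t * P z + (1 - t) * Q z)
      + (1 - t) * klDiv Q (fun z => t * P z + (1 - t) * Q z) with hfX
    set fY : ℝ → ℝ := fun t => t * klDiv (pushforward K P)
        (fun z => t * pushforward K P z + (1 - t) * pushforward K Q z)
      + (1 - t) * klDiv (pushforward K Q)
        (fun z => t * pushforward K P z + (1 - t) * pushforward K Q z) with hfY
    have hone : Filter.Tendsto (fun t : ℝ => 1 - t) (𝓝[>] 0) (𝓝 1) := by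
      have : Filter.Tendsto (fun t : ℝ => 1 - t) (𝓝 0) (𝓝 1) := by
        have hcont : Continuous (fun t : ℝ => 1 - t) := continuous_const.sub continuous_id
        simpa using hcont.tendsto 0
      exact this.mono_left nhdsWithin_le_nhds
    have hXlim : Filter.Tendsto (fun t => fX t / t) (𝓝[>] (0:ℝ)) (𝓝 (klDiv P Q)) := by
      have h := (tendsto_klDiv_mix hP hQ hac).add
        (hone.mul (tendsto_klDiv_mix_div hP hQ hac))
      rw [mul_zero, add_zero] at h
      apply h.congr'
      filter_upwards [self_mem_nhdsWithin] with t ht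
      have ht0 : t ≠ 0 := ne_of_gt ht
      rw [hfX]
      field_simp
    have hYlim : Filter.Tendsto (fun t => fY t / t) (𝓝[>] (0:ℝ))
        (𝓝 (klDiv (pushforward K P) (pushforward K Q))) := by
      have h := (tendsto_klDiv_mix hPp hQp hacp).add
        (hone.mul (tendsto_klDiv_mix_div hPp hQp hacp))
      rw [mul_zero, add_zero] at h
      apply h.congr'
      filter_upwards [self_mem_nhdsWithin] with t ht
      have ht0 : t ≠ 0 := ne_of_gt ht
      rw [hfY]
      field_simp
    have hratio : Filter.Tendsto (fun t => fY t / fX t) (𝓝[>] (0:ℝ))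
        (𝓝 (klDiv (pushforward K P) (pushforward K Q) / klDiv P Q)) := by
      have h := hYlim.div hXlim (ne_of_gt hD)
      apply h.congr'
      filter_upwards [self_mem_nhdsWithin] with t ht
      have ht0 : t ≠ 0 := ne_of_gt ht
      simp only [Pi.div_apply]
      rcases eq_or_ne (fX t) 0 with h0 | h0
      · simp [h0]
      · field_simp
        try ring
    -- eventually fX t > 0 and t < 1
    have hev1 : ∀ᶠ t in 𝓝[>] (0:ℝ), 0 < fX t := by
      have hgt : ∀ᶠ t in 𝓝[>] (0:ℝ), 0 < fX t / t :=
        hXlim.eventually (eventually_gt_nhds hD)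
      filter_upwards [hgt, self_mem_nhdsWithin] with t h1 h2
      have ht0 : t ≠ 0 := ne_of_gt h2
      have heq : fX t = (fX t / t) * t := (div_mul_cancel₀ _ ht0).symm
      rw [heq]
      exact mul_pos h1 h2
    have hev2 : ∀ᶠ t in 𝓝[>] (0:ℝ), t < 1 :=
      Filter.Eventually.filter_mono nhdsWithin_le_nhds
        (eventually_lt_nhds (by norm_num : (0:ℝ) < 1))
    have hmemB : ∀ᶠ t in 𝓝[>] (0:ℝ), fY t / fX t ∈ B := by
      filter_upwards [hev1, hev2, self_mem_nhdsWithin] with t hfXpos ht1 ht0'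
      have ht0 : 0 < t := ht0'
      set Jt : Bool × X → ℝ := fun p => if p.1 then t * P p.2 else (1 - t) * Q p.2 with hJt
      have hJtP : IsProbDist Jt := by
        constructor
        · intro p
          rw [hJt]
          dsimp only
          split_ifs
          · exact mul_nonneg (le_of_lt ht0) (hP.1 _)
          · exact mul_nonneg (by linarith) (hQ.1 _)
        · rw [Fintype.sum_prod_type, Fintype.sum_bool]
          simp only [hJt, if_true, Bool.false_eq_true, if_false]
          rw [← Finset.mul_sum, ← Finset.mul_sum, hP.2, hQ.2]
          ring
      have hmixX : mutInfo Jt = fX t :=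
        mutInfo_mix P Q hP.2 hQ.2 (ne_of_gt ht0) (by linarith)
      have hmixY : mutInfo (fun p : Bool × Y => ∑ x, Jt (p.1, x) * K x p.2) = fY t := by
        have hfun : (fun p : Bool × Y => ∑ x, Jt (p.1, x) * K x p.2)
            = fun p : Bool × Y => if p.1 then t * pushforward K P p.2
              else (1 - t) * pushforward K Q p.2 := by
          funext p
          obtain ⟨u, y⟩ := p
          cases u
          · simp only [hJt, Bool.false_eq_true, if_false]
            unfold pushforward
            rw [Finset.mul_sum]
            exact Finset.sum_congr rfl fun x _ => by ring
          · simp only [hJt, if_true]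
            unfold pushforward
            rw [Finset.mul_sum]
            exact Finset.sum_congr rfl fun x _ => by ring
        rw [hfun]
        exact mutInfo_mix (pushforward K P) (pushforward K Q) hPp.2 hQp.2
          (ne_of_gt ht0) (by linarith)
      rw [hBdef]
      refine ⟨Bool, inferInstance, Jt, hJtP, ?_, ?_⟩
      · rw [hmixX]; exact hfXpos
      · rw [hmixX, hmixY]
    constructor
    · rw [hr]
      exact le_of_tendsto hratio (hmemB.mono fun t ht => le_csSup hbddB ht)
    · obtain ⟨t, ht⟩ := hmemB.exists
      exact ⟨_, ht⟩
  rcases Set.eq_empty_or_nonempty A with hAe | hAne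
  · have hBe : B = ∅ := by
      rw [Set.eq_empty_iff_forall_notMem]
      intro r hrB
      obtain ⟨U, iU, J, hJ, hpos, -⟩ := hrB
      obtain ⟨P, Q, h1, h2, h3, h4⟩ := exists_pos_pair J hJ hpos
      have : klDiv (pushforward K P) (pushforward K Q) / klDiv P Q ∈ A :=
        ⟨P, Q, h1, h2, h3, h4, rfl⟩
      rw [hAe] at this
      exact this
    rw [hAe, hBe]
  · obtain ⟨r0, hr0⟩ := hAne
    have hBne : B.Nonempty := (claim2 r0 hr0).2
    apply le_antisymm
    · exact csSup_le ⟨r0, hr0⟩ fun r hr => (claim2 r hr).1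
    · exact csSup_le hBne claim1

end Helpers

/-- Mutual information characterization of the KL contraction coefficient:
`η_KL(K)` is the supremum of `I(U;Y)/I(U;X)` over all Markov chains `U → X → Y`
(with `U` a finite alphabet, joint law `P_{UX}` of `(U, X)`, and the conditional law
of `Y` given `X` equal to `K`) such that `I(U;X) > 0`. -/
theorem etaKL_eq_sup_mutInfo_ratio {X Y : Type*} [Fintype X] [Fintype Y]
    (K : X → Y → ℝ) (hK : IsChannel K) :
    etaKL K = sSup {r : ℝ | ∃ (U : Type) (_ : Fintype U) (PUX : U × X → ℝ),
      IsProbDist PUX ∧ 0 < mutInfo PUX ∧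
      r = mutInfo (fun p : U × Y => ∑ x, PUX (p.1, x) * K x p.2) / mutInfo PUX} :=
  etaKL_eq_sup_mutInfo_ratio' K hK
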